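/- Let N_1,…,N_m be positive integers and let G be a subgroup of S_{N_1}×…×S_{N_m} such that every projection G → S_{N_i} is surjective and the combined permutation-sign map G → (S_{N_1}/A_{N_1})×…×(S_{N_m}/A_{N_m}) ≅ {±1}^m is surjective. Then G = S_{N_1}×…×S_{N_m}. -/

import Mathlib

section Aux
open Equiv Equiv.Perm


lemma sign_hom_eq_one {n : ℕ} (φ : Perm (Fin n) →* ℤˣ) {τ : Perm (Fin n)}
    (hτ : Perm.sign τ = 1) : φ τ = 1 := by
  have h : τ ∈ Subgroup.closure {σ : Perm (Fin n) | σ.IsThreeCycle} := by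
    rw [closure_three_cycles_eq_alternating]
    exact mem_alternatingGroup.mpr hτ
  have hle : Subgroup.closure {σ : Perm (Fin n) | σ.IsThreeCycle} ≤ φ.ker := by
    rw [Subgroup.closure_le]
    intro c hc
    have h3 : c ^ 3 = 1 := by
      rw [← Equiv.Perm.IsThreeCycle.orderOf hc]; exact pow_orderOf_eq_one c
    have h31 : φ c ^ 3 = 1 := by rw [← map_pow, h3, map_one]
    have : φ c = 1 := by
      calc φ c = φ c ^ 3 := by rw [pow_succ, Int.units_sq, one_mul]
        _ = 1 := h31
    exact this
  exact hle h

lemma hom_even_pi {ι : Type*} [Fintype ι] [DecidableEq ι] {N : ι → ℕ}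
    (φ : (∀ i, Perm (Fin (N i))) →* ℤˣ) (x : ∀ i, Perm (Fin (N i)))
    (hx : ∀ i, Perm.sign (x i) = 1) : φ x = 1 := by
  rw [← Finset.noncommProd_mulSingle x]
  refine (Finset.map_noncommProd _ _ _ φ).trans ?_
  rw [Finset.noncommProd_eq_prod]
  refine Finset.prod_eq_one fun i _ => ?_
  exact sign_hom_eq_one (φ.comp (MonoidHom.mulSingle (fun j => Perm (Fin (N j))) i)) (hx i)



lemma top_of_alt_le {n : ℕ} {K : Subgroup (Perm (Fin n))}
    (hA : alternatingGroup (Fin n) ≤ K) {τ : Perm (Fin n)} (hτ : τ ∈ K)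
    (hs : Perm.sign τ = -1) : K = ⊤ := by
  rw [Subgroup.eq_top_iff']
  intro σ
  rcases Int.units_eq_one_or (Perm.sign σ) with h | h
  · exact hA (mem_alternatingGroup.mpr h)
  · have h1 : σ * τ⁻¹ ∈ K := hA (mem_alternatingGroup.mpr (by
      rw [map_mul, map_inv, h, hs]; decide))
    have := K.mul_mem h1 hτ
    simpa using this

lemma L_of_D {n : ℕ}
    (D : ∀ τ σ : Perm (Fin n), Perm.sign τ = -1 → Perm.sign σ = 1 →
      ∃ π₁ π₂ : Perm (Fin n), σ = π₁*τ*π₁⁻¹*(π₂*τ*π₂⁻¹))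
    (K : Subgroup (Perm (Fin n))) (hK : K.Normal) {τ : Perm (Fin n)} (hτ : τ ∈ K)
    (hs : Perm.sign τ = -1) : K = ⊤ := by
  refine top_of_alt_le (fun σ hσ => ?_) hτ hs
  obtain ⟨π₁, π₂, h⟩ := D τ σ hs (mem_alternatingGroup.mp hσ)
  rw [h]
  exact K.mul_mem (hK.conj_mem τ hτ π₁) (hK.conj_mem τ hτ π₂)

lemma threeCycle_le {n : ℕ} (K : Subgroup (Perm (Fin n))) (hK : K.Normal)
    {c : Perm (Fin n)} (hc : c.IsThreeCycle) (hcK : c ∈ K) :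
    alternatingGroup (Fin n) ≤ K := by
  rw [← closure_three_cycles_eq_alternating, Subgroup.closure_le]
  intro d hd
  obtain ⟨π, hπ⟩ := isConj_iff.mp
    (isConj_of_cycleType_eq (hc.cycleType.trans hd.cycleType.symm))
  rw [← hπ]
  exact hK.conj_mem c hcK π



lemma L5 {n : ℕ} (hn : 5 ≤ n) (K : Subgroup (Perm (Fin n))) (hK : K.Normal)
    {τ : Perm (Fin n)} (hτ : τ ∈ K) (hs : Perm.sign τ = -1) : K = ⊤ := by
  have hcard : (5 : ℕ) ≤ Fintype.card (Fin n) := by simpa using hn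
  have hτ1 : τ ≠ 1 := by rintro rfl; simp at hs
  obtain ⟨a, ha⟩ : ∃ a, τ a ≠ a := by
    by_contra h; push_neg at h; exact hτ1 (Equiv.ext h)
  obtain ⟨b, hb⟩ : ∃ b : Fin n, b ∉ ({a, τ a, τ⁻¹ a} : Finset (Fin n)) := by
    by_contra hcon; push_neg at hcon
    have hsub : (Finset.univ : Finset (Fin n)) ⊆ {a, τ a, τ⁻¹ a} :=
      fun x _ => hcon x
    have c3 : ({a, τ a, τ⁻¹ a} : Finset (Fin n)).card ≤ 3 :=
      (Finset.card_insert_le _ _).trans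
        (Nat.succ_le_succ ((Finset.card_insert_le _ _).trans (by simp)))
    have := (Finset.card_le_card hsub).trans c3
    simp [Finset.card_univ] at this
    omega
  simp only [Finset.mem_insert, Finset.mem_singleton, not_or] at hb
  obtain ⟨hba', hbτa', hbτia'⟩ := hb
  have hba : b ≠ a := hba'
  have hbτa : b ≠ τ a := hbτa'
  have hbτia : b ≠ τ⁻¹ a := hbτia'
  have hτba : τ b ≠ a := fun h => hbτia (by rw [← h]; simp)
  have hτaτb : τ a ≠ τ b := fun h => hba (τ.injective h).symm
  -- k = swap a b * swap (τ a) (τ b) ∈ K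
  have hkK : swap a b * swap (τ a) (τ b) ∈ K := by
    have hk : swap a b * swap (τ a) (τ b) = swap a b * τ * (swap a b)⁻¹ * τ⁻¹ := by
      rw [swap_apply_apply, swap_inv]; group
    rw [hk]
    exact K.mul_mem (hK.conj_mem τ hτ (swap a b)) (K.inv_mem hτ)
  have hτaa : τ a ≠ a := ha
  have hτab : τ a ≠ b := fun h => hbτa h.symm
  -- produce a three-cycle in K
  have h3 : ∃ c ∈ K, c.IsThreeCycle := by
    by_cases hdb : τ b = b
    · refine ⟨swap a b * swap (τ a) (τ b), hkK, ?_⟩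
      rw [hdb, swap_comm a b, swap_comm (τ a) b]
      exact isThreeCycle_swap_mul_swap_same hba hbτa (Ne.symm ha)
    · -- all four distinct; pick a fifth point e
      obtain ⟨e, he⟩ : ∃ e : Fin n, e ∉ ({a, b, τ a, τ b} : Finset (Fin n)) := by
        by_contra hcon; push_neg at hcon
        have hsub : (Finset.univ : Finset (Fin n)) ⊆ {a, b, τ a, τ b} :=
          fun x _ => hcon x
        have c4 : ({a, b, τ a, τ b} : Finset (Fin n)).card ≤ 4 :=
          (Finset.card_insert_le _ _).trans (Nat.succ_le_succ
            ((Finset.card_insert_le _ _).trans (Nat.succ_le_succ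
              ((Finset.card_insert_le _ _).trans (by simp)))))
        have := (Finset.card_le_card hsub).trans c4
        simp [Finset.card_univ] at this
        omega
      simp only [Finset.mem_insert, Finset.mem_singleton, not_or] at he
      obtain ⟨hea', heb', heτa', heτb'⟩ := he
      have hea : e ≠ a := hea'
      have heb : e ≠ b := heb'
      have heτa : e ≠ τ a := heτa'
      have heτb : e ≠ τ b := heτb'
      have hbτb : b ≠ τ b := fun h => hdb h.symm
      have hconj : swap (τ b) e * (swap a b * swap (τ a) (τ b)) * (swap (τ b) e)⁻¹
          = swap a b * swap (τ a) e := by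
        rw [show swap (τ b) e * (swap a b * swap (τ a) (τ b)) * (swap (τ b) e)⁻¹
            = (swap (τ b) e * swap a b * (swap (τ b) e)⁻¹)
              * (swap (τ b) e * swap (τ a) (τ b) * (swap (τ b) e)⁻¹) from by group,
          ← swap_apply_apply, ← swap_apply_apply,
          swap_apply_of_ne_of_ne (Ne.symm hτba) (Ne.symm hea),
          swap_apply_of_ne_of_ne hbτb (Ne.symm heb),
          swap_apply_of_ne_of_ne hτaτb (Ne.symm heτa),
          swap_apply_left]
      have hk'K : swap a b * swap (τ a) e ∈ K := by
        rw [← hconj]; exact hK.conj_mem _ hkK _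
      refine ⟨(swap a b * swap (τ a) (τ b))⁻¹ * (swap a b * swap (τ a) e), 
        K.mul_mem (K.inv_mem hkK) hk'K, ?_⟩
      have : (swap a b * swap (τ a) (τ b))⁻¹ * (swap a b * swap (τ a) e)
          = swap (τ a) (τ b) * swap (τ a) e := by
        rw [mul_inv_rev, swap_inv, swap_inv]
        rw [show swap (τ a) (τ b) * swap a b * (swap a b * swap (τ a) e)
            = swap (τ a) (τ b) * (swap a b * swap a b) * swap (τ a) e from by group,
          swap_mul_self, mul_one]
      rw [this]
      exact isThreeCycle_swap_mul_swap_same hτaτb (Ne.symm heτa) (Ne.symm heτb)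
  obtain ⟨c, hcK, hc⟩ := h3
  exact top_of_alt_le (threeCycle_le K hK hc hcK) hτ hs



set_option maxRecDepth 100000 in
lemma normal_top {n : ℕ} (K : Subgroup (Perm (Fin n))) (hK : K.Normal)
    {τ : Perm (Fin n)} (hτ : τ ∈ K) (hs : Perm.sign τ = -1) : K = ⊤ := by
  rcases lt_or_ge n 5 with h5 | h5
  · interval_cases n
    · exact L_of_D (by decide) K hK hτ hs
    · exact L_of_D (by decide) K hK hτ hs
    · exact L_of_D (by decide) K hK hτ hs
    · exact L_of_D (by decide) K hK hτ hs
    · exact L_of_D (by decide) K hK hτ hs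
  · exact L5 h5 K hK hτ hs



theorem aux : ∀ (n : ℕ) (ι : Type) [Fintype ι] [DecidableEq ι], Fintype.card ι ≤ n →
    ∀ (N : ι → ℕ) (G : Subgroup (∀ i : ι, Perm (Fin (N i)))),
    (∀ (i : ι) (τ : Perm (Fin (N i))), ∃ σ ∈ G, σ i = τ) →
    (∀ s : ι → ℤˣ, ∃ σ ∈ G, ∀ i, Perm.sign (σ i) = s i) →
    G = ⊤ := by
  intro n
  induction n with
  | zero =>
    intro ι _ _ hcard N G _ _
    haveI : IsEmpty ι := Fintype.card_eq_zero_iff.mp (Nat.le_zero.mp hcard)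
    rw [Subgroup.eq_top_iff']
    intro x
    have hx : x = 1 := funext fun i => (IsEmpty.false i).elim
    rw [hx]; exact G.one_mem
  | succ n IH =>
    intro ι _ _ hcard N G hproj hsign
    suffices key : ∀ (i : ι) (τ : Perm (Fin (N i))),
        Pi.mulSingle i τ ∈ G by
      rw [Subgroup.eq_top_iff']
      intro x
      rw [← Finset.noncommProd_mulSingle x]
      exact Subgroup.noncommProd_mem G _ fun i _ => key i (x i)
    intro i
    -- surjectivity onto the complement, by induction hypothesis
    have hcard' : Fintype.card {j : ι // j ≠ i} ≤ n := by
      have : Fintype.card {j : ι // j ≠ i} < Fintype.card ι :=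
        Fintype.card_subtype_lt (x := i) (by simp)
      omega
    let res : (∀ j : ι, Perm (Fin (N j))) →* (∀ j : {j : ι // j ≠ i}, Perm (Fin (N j.1))) :=
      { toFun := fun x j => x j.1, map_one' := rfl, map_mul' := fun _ _ => rfl }
    have hGc : Subgroup.map res G = ⊤ := by
      apply IH _ hcard' (fun j => N j.1)
      · intro j τ
        obtain ⟨σ, hσG, hσ⟩ := hproj j.1 τ
        exact ⟨res σ, Subgroup.mem_map_of_mem res hσG, hσ⟩
      · intro s
        obtain ⟨σ, hσG, hσ⟩ := hsign (fun j => if h : j = i then 1 else s ⟨j, h⟩)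
        refine ⟨res σ, Subgroup.mem_map_of_mem res hσG, fun j => ?_⟩
        have := hσ j.1
        rwa [dif_neg j.2] at this
    have hsurj : ∀ x : ∀ j : ι, Perm (Fin (N j)), ∃ σ, σ ∈ G ∧ ∀ j, j ≠ i → σ j = x j := by
      intro x
      have : res x ∈ Subgroup.map res G := by rw [hGc]; trivial
      obtain ⟨σ, hσG, hσ⟩ := this
      exact ⟨σ, hσG, fun j hj => congrFun hσ ⟨j, hj⟩⟩
    -- the subgroup K of permutations τ with mulSingle i τ ∈ G
    set K : Subgroup (Perm (Fin (N i))) :=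
      Subgroup.comap (MonoidHom.mulSingle (fun j => Perm (Fin (N j))) i) G with hKdef
    have hKmem : ∀ τ : Perm (Fin (N i)), τ ∈ K ↔ Pi.mulSingle i τ ∈ G := fun τ => Iff.rfl
    have hKnormal : K.Normal := by
      constructor
      intro τ hτ π
      obtain ⟨σ, hσG, hσ⟩ := hproj i π
      have heq : Pi.mulSingle i (π * τ * π⁻¹) = σ * Pi.mulSingle i τ * σ⁻¹ := by
        funext j
        by_cases hj : j = i
        · subst hj
          simp [hσ]
        · simp [Pi.mulSingle_eq_of_ne hj]
      rw [hKmem, heq]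
      exact G.mul_mem (G.mul_mem hσG ((hKmem τ).mp hτ)) (G.inv_mem hσG)
    -- K contains an odd permutation
    have hodd : ∃ τ ∈ K, Perm.sign τ = -1 := by
      by_contra hcon
      push_neg at hcon
      have hA : ∀ ρ, ρ ∈ G → (∀ j, j ≠ i → ρ j = 1) → Perm.sign (ρ i) = 1 := by
        intro ρ hρ h1
        have hρK : ρ i ∈ K := by
          rw [hKmem]
          have : Pi.mulSingle i (ρ i) = ρ := by
            funext j
            by_cases hj : j = i
            · subst hj; simp
            · rw [Pi.mulSingle_eq_of_ne hj, h1 j hj]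
          rwa [this]
        rcases Int.units_eq_one_or (Perm.sign (ρ i)) with h | h
        · exact h
        · exact absurd h (hcon _ hρK)
      have W : ∀ σ σ', σ ∈ G → σ' ∈ G → (∀ j, j ≠ i → σ j = σ' j) →
          Perm.sign (σ i) = Perm.sign (σ' i) := by
        intro σ σ' hσ hσ' hagree
        have h1 : ∀ j, j ≠ i → (σ * σ'⁻¹) j = 1 := by
          intro j hj
          simp [hagree j hj]
        have := hA (σ * σ'⁻¹) (G.mul_mem hσ (G.inv_mem hσ')) h1
        simp only [Pi.mul_apply, Pi.inv_apply, map_mul, map_inv] at this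
        exact mul_inv_eq_one.mp this
      choose rep hrepG hrep using hsurj
      set F : (∀ j : ι, Perm (Fin (N j))) →* ℤˣ :=
        { toFun := fun x => Perm.sign (rep x i) * Perm.sign (x i)
          map_one' := by
            have h1 : Perm.sign (rep 1 i) = Perm.sign ((1 : ∀ j : ι, Perm (Fin (N j))) i) :=
              W (rep 1) 1 (hrepG 1) G.one_mem (hrep 1)
            simp only [h1]
            simp
          map_mul' := by
            intro x y
            have h1 : Perm.sign (rep (x * y) i) = Perm.sign ((rep x * rep y) i) :=
              W (rep (x * y)) (rep x * rep y) (hrepG (x * y))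
                (G.mul_mem (hrepG x) (hrepG y))
                (fun j hj => by
                  simp only [Pi.mul_apply, hrep (x * y) j hj, hrep x j hj, hrep y j hj])
            simp only [h1, Pi.mul_apply, map_mul]
            exact mul_mul_mul_comm _ _ _ _ } with hFdef
      obtain ⟨σ, hσG, hσs⟩ := hsign (fun j => if j = i then -1 else 1)
      have hFσ1 : F σ = 1 := by
        show Perm.sign (rep σ i) * Perm.sign (σ i) = 1
        rw [W (rep σ) σ (hrepG σ) hσG (hrep σ)]
        exact Int.units_mul_self _
      have hyz : σ = Function.update σ i 1 * Pi.mulSingle i (σ i) := by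
        funext j
        by_cases hj : j = i
        · subst hj; simp
        · simp [Function.update_of_ne hj, Pi.mulSingle_eq_of_ne hj]
      have hFy : F (Function.update σ i 1) = 1 := by
        apply hom_even_pi
        intro j
        by_cases hj : j = i
        · subst hj; simp
        · rw [Function.update_of_ne hj]
          have := hσs j
          rwa [if_neg hj] at this
      have hFz : F (Pi.mulSingle i (σ i)) = -1 := by
        have h1 : Perm.sign (rep (Pi.mulSingle i (σ i)) i) = 1 := by
          have := W (rep (Pi.mulSingle i (σ i))) 1 (hrepG (Pi.mulSingle i (σ i))) G.one_mem
            (fun j hj => by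
              rw [hrep _ j hj, Pi.mulSingle_eq_of_ne hj, Pi.one_apply])
          simpa using this
        have h2 := hσs i
        rw [if_pos rfl] at h2
        have hunfold : F (Pi.mulSingle i (σ i)) = Perm.sign (rep (Pi.mulSingle i (σ i)) i)
            * Perm.sign ((Pi.mulSingle i (σ i) : ∀ j : ι, Perm (Fin (N j))) i) := rfl
        rw [hunfold, h1, Pi.mulSingle_eq_same, h2, one_mul]
      have hcontra : F σ = -1 := by
        rw [hyz, map_mul, hFy, hFz, one_mul]
      rw [hFσ1] at hcontra
      exact absurd hcontra (by decide)
    obtain ⟨τ, hτK, hτs⟩ := hodd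
    have hKtop : K = ⊤ := normal_top K hKnormal hτK hτs
    intro τ
    have : τ ∈ K := hKtop ▸ Subgroup.mem_top τ
    exact (hKmem τ).mp this


end Aux

/-- if `G ≤ S_{N_1} × … × S_{N_m}` surjects onto each factor `S_{N_i}`
and the combined sign map `G → {±1}^m` is surjective, then `G` is the full product. -/
theorem subgroup_of_product_of_symmetric_groups_eq_top
    (m : ℕ) (hm : 1 ≤ m) (N : Fin m → ℕ) (hN : ∀ i, 1 ≤ N i)
    (G : Subgroup (∀ i : Fin m, Equiv.Perm (Fin (N i))))
    (hproj : ∀ (i : Fin m) (τ : Equiv.Perm (Fin (N i))),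
      ∃ σ ∈ G, σ i = τ)
    (hsign : ∀ s : Fin m → ℤˣ,
      ∃ σ ∈ G, ∀ i, Equiv.Perm.sign (σ i) = s i) :
    G = ⊤ :=
  aux m (Fin m) (by simp) N G hproj hsign
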